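/- Fix an integer n ≥ 1 and an integer l with 0 ≤ l ≤ n−1, and take λ = 1, θ = 1/2. With h = n, let q^{(n,n)}_0, …, q^{(n,n)}_{n−l−1} ∈ ℝ[j,k] be the coefficients of the quotient polynomial Q_{n,n,l}, and let c^{(1,1/2)}_{n,n,l} denote the coefficient of the monomial j^{n−l−1} (i.e., j^{n−l−1}k^0) in q^{(n,n)}_{n−l−1}. Then c^{(1,1/2)}_{n,n,l} = (−1)^{n−l−1} · C(n, l+1) / 2^{2n−1}. -/

import Mathlib

open Polynomial

/-- Rising factorial in a commutative ring: `(a)_m = a (a+1) ⋯ (a+m−1)`, with `(a)_0 = 1`. -/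
noncomputable def rfp {S : Type*} [CommRing S] (a : S) (m : ℕ) : S :=
  ∏ i ∈ Finset.range m, (a + (i : S))

/-- The base ring `R = ℝ[j,k]`. -/
abbrev R2 : Type := MvPolynomial (Fin 2) ℝ

/-- The variable `j` as a constant of `R[d]`. -/
noncomputable def Jv : Polynomial R2 := Polynomial.C (MvPolynomial.X 0)

/-- The variable `k` as a constant of `R[d]`. -/
noncomputable def Kv : Polynomial R2 := Polynomial.C (MvPolynomial.X 1)

/-- Embedding of real scalars into `R[d]`. -/
noncomputable def cst (x : ℝ) : Polynomial R2 := Polynomial.C (MvPolynomial.C x)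

/-- The dividend `P_{n,n}` (case `h = n`, `λ = 1`, `θ = 1/2`). -/
noncomputable def Pnn (n : ℕ) : Polynomial R2 :=
  (X - 2 * Jv - 1) * (X + 2 * (n : Polynomial R2) - 2 * Jv - 1) * rfp (X - Jv) n *
    rfp (cst (1 / 2) * X - Jv) n *
    rfp (cst (1 / 2) * X - Jv + Kv) n *
    rfp (cst (1 / 2) * X - Jv + Kv) n

/-- The divisor `D_{n,n,l}` (case `h = n`, `λ = 1`, `θ = 1/2`). -/
noncomputable def Dnnl (n l : ℕ) : Polynomial R2 :=
  cst (1 / 2) * X ^ (l + 1) * (X + (n : Polynomial R2) - 2 * Jv - 1) *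
    rfp (cst (1 / 2) * X - Jv) n *
    rfp (X - 2 * Jv - 1 + Kv) (2 * n + 1)

noncomputable def psi : R2 →+* Polynomial ℝ :=
  MvPolynomial.eval₂Hom Polynomial.C (fun i => if i = 0 then Polynomial.X else 0)

noncomputable def phic : R2 →+* Polynomial (Polynomial ℝ) :=
  (Polynomial.mapRingHom Polynomial.C).comp psi

noncomputable def Phi : Polynomial R2 →+* Polynomial (Polynomial ℝ) :=
  Polynomial.eval₂RingHom phic (Polynomial.X * Polynomial.C Polynomial.X)

lemma rfp_eq_prod {A : Type*} [CommRing A] (α β : A) (m : ℕ) :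
    rfp (Polynomial.C α * Polynomial.X + Polynomial.C β) m
      = ∏ i ∈ Finset.range m, (Polynomial.C α * Polynomial.X + Polynomial.C (β + (i : A))) := by
  unfold rfp
  refine Finset.prod_congr rfl fun i _ => ?_
  rw [Polynomial.C_add, map_natCast, add_assoc]

lemma lin_ne_zero {A : Type*} [CommRing A] [Nontrivial A] {α : A} (hα : α ≠ 0) (β : A) :
    Polynomial.C α * Polynomial.X + Polynomial.C β ≠ 0 := by
  intro h
  apply hα
  have := congrArg Polynomial.leadingCoeff h
  rwa [Polynomial.leadingCoeff_linear hα, Polynomial.leadingCoeff_zero] at this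

lemma rfp_lin_natDegree {A : Type*} [CommRing A] [IsDomain A] {α : A} (hα : α ≠ 0) (β : A)
    (m : ℕ) : (rfp (Polynomial.C α * Polynomial.X + Polynomial.C β) m).natDegree = m := by
  rw [rfp_eq_prod, Polynomial.natDegree_prod _ _ (fun i _ => lin_ne_zero hα _),
    Finset.sum_congr rfl (fun i _ => Polynomial.natDegree_linear hα)]
  simp

lemma rfp_lin_leadingCoeff {A : Type*} [CommRing A] [IsDomain A] {α : A} (hα : α ≠ 0) (β : A)
    (m : ℕ) : (rfp (Polynomial.C α * Polynomial.X + Polynomial.C β) m).leadingCoeff = α ^ m := by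
  rw [rfp_eq_prod, Polynomial.leadingCoeff_prod,
    Finset.prod_congr rfl (fun i _ => Polynomial.leadingCoeff_linear hα)]
  simp

lemma rfp_lin_ne_zero {A : Type*} [CommRing A] [IsDomain A] {α : A} (hα : α ≠ 0) (β : A)
    (m : ℕ) : rfp (Polynomial.C α * Polynomial.X + Polynomial.C β) m ≠ 0 := by
  intro h
  have := congrArg Polynomial.leadingCoeff h
  rw [rfp_lin_leadingCoeff hα, Polynomial.leadingCoeff_zero] at this
  exact pow_ne_zero m hα this

lemma psi_coeff (r : R2) (m : ℕ) :
    (psi r).coeff m = MvPolynomial.coeff (Finsupp.single (0 : Fin 2) m) r := by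
  induction r using MvPolynomial.induction_on' with
  | add p q hp hq => simp [map_add, hp, hq]
  | monomial u c =>
      have hpsi : psi (MvPolynomial.monomial u c)
          = Polynomial.C c * (Polynomial.X ^ (u 0) * (0 : Polynomial ℝ) ^ (u 1)) := by
        rw [psi, MvPolynomial.eval₂Hom_monomial]
        congr 1
        rw [Finsupp.prod_fintype _ _ (fun i => pow_zero _), Fin.prod_univ_two]
        norm_num
      rw [hpsi, MvPolynomial.coeff_monomial]
      by_cases h1 : u 1 = 0
      · rw [h1, pow_zero, mul_one]
        rw [coeff_C_mul, coeff_X_pow]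
        have : u = Finsupp.single (0 : Fin 2) m ↔ m = u 0 := by
          constructor
          · intro h; rw [h]; simp
          · intro h
            ext i
            fin_cases i
            · simp [h]
            · simp [h1, Finsupp.single_eq_of_ne]
        by_cases h2 : m = u 0
        · rw [if_pos h2, if_pos (this.mpr h2)]; ring
        · rw [if_neg h2, if_neg (fun hh => h2 (this.mp hh))]; ring
      · rw [zero_pow h1, mul_zero, mul_zero, coeff_zero]
        rw [if_neg]
        intro h
        apply h1
        rw [h]
        simp [Finsupp.single_eq_of_ne]

lemma Phi_coeff (p : Polynomial R2) (m : ℕ) :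
    (Phi p).coeff m
      = ∑ e ∈ p.support,
          if e ≤ m then Polynomial.C ((psi (p.coeff e)).coeff (m - e)) * Polynomial.X ^ e
          else 0 := by
  rw [Phi, coe_eval₂RingHom, eval₂_eq_sum, Polynomial.sum_def, finset_sum_coeff]
  refine Finset.sum_congr rfl fun e _ => ?_
  have h1 : (Polynomial.X * Polynomial.C Polynomial.X : Polynomial (Polynomial ℝ)) ^ e
      = Polynomial.C (Polynomial.X ^ e) * Polynomial.X ^ e := by
    rw [mul_pow, ← Polynomial.C_pow]; ring
  have h2 : phic (p.coeff e) = (psi (p.coeff e)).map Polynomial.C := rfl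
  rw [h1, h2, ← mul_assoc, mul_comm ((psi (p.coeff e)).map Polynomial.C)
      (Polynomial.C (Polynomial.X ^ e)), mul_assoc, coeff_C_mul,
      Polynomial.coeff_mul_X_pow', Polynomial.coeff_map]
  split_ifs with h
  · rw [mul_comm]
  · rw [mul_zero]

lemma Phi_coeff_natDegree_le (p : Polynomial R2) (m : ℕ) :
    ((Phi p).coeff m).natDegree ≤ p.natDegree := by
  rw [Phi_coeff]
  apply Polynomial.natDegree_sum_le_of_forall_le
  intro e he
  split_ifs
  · refine natDegree_mul_le.trans ?_
    simp only [natDegree_C, natDegree_X_pow, zero_add]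
    exact Polynomial.le_natDegree_of_mem_supp e he
  · simp

lemma Phi_coeff_coeff_zero (p : Polynomial R2) (m : ℕ) :
    ((Phi p).coeff m).coeff 0 = (psi (p.coeff 0)).coeff m := by
  rw [Phi_coeff, finset_sum_coeff]
  have hterm : ∀ e ∈ p.support,
      ((if e ≤ m then Polynomial.C ((psi (p.coeff e)).coeff (m - e)) * Polynomial.X ^ e
        else 0) : Polynomial ℝ).coeff 0
        = if e = 0 then (psi (p.coeff 0)).coeff m else 0 := by
    intro e _
    rcases eq_or_ne e 0 with rfl | hne
    · simp
    · rw [if_neg hne]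
      split_ifs with h
      · rw [coeff_C_mul, coeff_X_pow, if_neg (fun hh => hne hh.symm), mul_zero]
      · simp
  rw [Finset.sum_congr rfl hterm, Finset.sum_ite_eq' p.support 0
      (fun _ => (psi (p.coeff 0)).coeff m)]
  split_ifs with h
  · rfl
  · have : p.coeff 0 = 0 := Polynomial.notMem_support_iff.mp h
    simp [this]


lemma Phi_X : Phi Polynomial.X = Polynomial.X * Polynomial.C Polynomial.X :=
  Polynomial.eval₂_X _ _

lemma Phi_C (r : R2) : Phi (Polynomial.C r) = (psi r).map Polynomial.C :=
  Polynomial.eval₂_C _ _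

lemma Phi_Jv : Phi Jv = Polynomial.X := by
  rw [Jv, Phi_C, psi, MvPolynomial.eval₂Hom_X']
  simp

lemma Phi_Kv : Phi Kv = 0 := by
  rw [Kv, Phi_C, psi, MvPolynomial.eval₂Hom_X']
  norm_num

lemma Phi_cst (x : ℝ) : Phi (cst x) = Polynomial.C (Polynomial.C x) := by
  rw [cst, Phi_C, psi]
  simp

lemma Phi_rfp (a : Polynomial R2) (m : ℕ) : Phi (rfp a m) = rfp (Phi a) m := by
  unfold rfp
  rw [map_prod]
  exact Finset.prod_congr rfl fun i _ => by rw [map_add, map_natCast]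

section FactorImages

noncomputable def e2 : Polynomial ℝ := Polynomial.X - Polynomial.C 2
noncomputable def e1 : Polynomial ℝ := Polynomial.X - Polynomial.C 1
noncomputable def eh : Polynomial ℝ := Polynomial.C (2⁻¹ : ℝ) * e2

lemma he2 : e2 ≠ 0 := Polynomial.X_sub_C_ne_zero 2
lemma he1 : e1 ≠ 0 := Polynomial.X_sub_C_ne_zero 1
lemma heh : eh ≠ 0 := mul_ne_zero (by simp) he2

lemma Phi_F1 : Phi (Polynomial.X - 2 * Jv - 1)
    = Polynomial.C e2 * Polynomial.X + Polynomial.C (-1) := by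
  simp only [map_sub, map_add, map_mul, map_one, map_ofNat, map_neg, Phi_X, Phi_Jv, e2]
  ring

lemma Phi_F2 (n : ℕ) : Phi (Polynomial.X + 2 * (n : Polynomial R2) - 2 * Jv - 1)
    = Polynomial.C e2 * Polynomial.X + Polynomial.C (2 * (n : Polynomial ℝ) - 1) := by
  simp only [map_sub, map_add, map_mul, map_one, map_ofNat, map_natCast, map_neg, Phi_X,
    Phi_Jv, e2, Polynomial.C_eq_natCast]
  ring

lemma Phi_F3 (n : ℕ) : Phi (Polynomial.X + (n : Polynomial R2) - 2 * Jv - 1)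
    = Polynomial.C e2 * Polynomial.X + Polynomial.C ((n : Polynomial ℝ) - 1) := by
  simp only [map_sub, map_add, map_mul, map_one, map_ofNat, map_natCast, map_neg, Phi_X,
    Phi_Jv, e2, Polynomial.C_eq_natCast]
  ring

lemma Phi_F4 : Phi (Polynomial.X - 2 * Jv - 1 + Kv)
    = Polynomial.C e2 * Polynomial.X + Polynomial.C (-1) := by
  rw [map_add, Phi_F1, Phi_Kv, add_zero]

lemma Phi_G1 : Phi (Polynomial.X - Jv)
    = Polynomial.C e1 * Polynomial.X + Polynomial.C 0 := by
  simp only [map_sub, map_one, Phi_X, Phi_Jv, e1, Polynomial.C_0]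
  ring

lemma Phi_G2 : Phi (cst (1 / 2) * Polynomial.X - Jv)
    = Polynomial.C eh * Polynomial.X + Polynomial.C 0 := by
  have h : (Polynomial.C (Polynomial.C ((2:ℝ)⁻¹)) * 2 : Polynomial (Polynomial ℝ)) = 1 := by
    rw [show ((2 : Polynomial (Polynomial ℝ))) = Polynomial.C (Polynomial.C (2:ℝ)) by simp only [map_ofNat],
      ← map_mul, ← map_mul]
    norm_num
  simp only [map_sub, map_mul, Phi_X, Phi_Jv, Phi_cst, eh, e2, map_ofNat, Polynomial.C_0, one_div]
  linear_combination (Polynomial.X : Polynomial (Polynomial ℝ)) * h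

lemma Phi_G2' : Phi (cst (1 / 2) * Polynomial.X - Jv + Kv)
    = Polynomial.C eh * Polynomial.X + Polynomial.C 0 := by
  rw [map_add, Phi_G2, Phi_Kv, add_zero]

end FactorImages

lemma natDegree_mul6 {A : Type*} [CommRing A] [IsDomain A] {a b c d e f : Polynomial A}
    (ha : a ≠ 0) (hb : b ≠ 0) (hc : c ≠ 0) (hd : d ≠ 0) (he : e ≠ 0) (hf : f ≠ 0) :
    (a*b*c*d*e*f).natDegree = a.natDegree + b.natDegree + c.natDegree + d.natDegree
      + e.natDegree + f.natDegree := by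
  rw [Polynomial.natDegree_mul
      (mul_ne_zero (mul_ne_zero (mul_ne_zero (mul_ne_zero ha hb) hc) hd) he) hf,
    Polynomial.natDegree_mul (mul_ne_zero (mul_ne_zero (mul_ne_zero ha hb) hc) hd) he,
    Polynomial.natDegree_mul (mul_ne_zero (mul_ne_zero ha hb) hc) hd,
    Polynomial.natDegree_mul (mul_ne_zero ha hb) hc,
    Polynomial.natDegree_mul ha hb]

lemma natDegree_mul5 {A : Type*} [CommRing A] [IsDomain A] {a b c d e : Polynomial A}
    (ha : a ≠ 0) (hb : b ≠ 0) (hc : c ≠ 0) (hd : d ≠ 0) (he : e ≠ 0) :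
    (a*b*c*d*e).natDegree = a.natDegree + b.natDegree + c.natDegree + d.natDegree
      + e.natDegree := by
  rw [Polynomial.natDegree_mul (mul_ne_zero (mul_ne_zero (mul_ne_zero ha hb) hc) hd) he,
    Polynomial.natDegree_mul (mul_ne_zero (mul_ne_zero ha hb) hc) hd,
    Polynomial.natDegree_mul (mul_ne_zero ha hb) hc,
    Polynomial.natDegree_mul ha hb]

lemma Phi_Pnn (n : ℕ) : Phi (Pnn n)
    = (Polynomial.C e2 * Polynomial.X + Polynomial.C (-1))
      * (Polynomial.C e2 * Polynomial.X + Polynomial.C (2 * (n : Polynomial ℝ) - 1))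
      * rfp (Polynomial.C e1 * Polynomial.X + Polynomial.C 0) n
      * rfp (Polynomial.C eh * Polynomial.X + Polynomial.C 0) n
      * rfp (Polynomial.C eh * Polynomial.X + Polynomial.C 0) n
      * rfp (Polynomial.C eh * Polynomial.X + Polynomial.C 0) n := by
  rw [Pnn]
  simp only [map_mul, Phi_rfp]
  rw [Phi_F1, Phi_F2, Phi_G1, Phi_G2, Phi_G2']

lemma Phi_Dnnl (n l : ℕ) : Phi (Dnnl n l)
    = Polynomial.C (Polynomial.C ((1:ℝ)/2))
      * (Polynomial.X * Polynomial.C Polynomial.X) ^ (l+1)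
      * (Polynomial.C e2 * Polynomial.X + Polynomial.C ((n : Polynomial ℝ) - 1))
      * rfp (Polynomial.C eh * Polynomial.X + Polynomial.C 0) n
      * rfp (Polynomial.C e2 * Polynomial.X + Polynomial.C (-1)) (2*n+1) := by
  rw [Dnnl, map_mul, map_mul, map_mul, map_mul, map_pow, Phi_rfp, Phi_rfp,
    Phi_F3, Phi_G2, Phi_F4, Phi_cst, Phi_X]

lemma XCX_ne : (Polynomial.X * Polynomial.C Polynomial.X : Polynomial (Polynomial ℝ)) ≠ 0 := by
  intro h
  have := congrArg (fun p => Polynomial.coeff p 1) h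
  simp at this

lemma XCX_lin : (Polynomial.X * Polynomial.C Polynomial.X : Polynomial (Polynomial ℝ))
    = Polynomial.C Polynomial.X * Polynomial.X + Polynomial.C 0 := by
  rw [Polynomial.C_0, add_zero, mul_comm]

lemma Phi_Pnn_natDegree (n : ℕ) : (Phi (Pnn n)).natDegree = 4*n+2 := by
  rw [Phi_Pnn, natDegree_mul6 (lin_ne_zero he2 _) (lin_ne_zero he2 _)
    (rfp_lin_ne_zero he1 _ n) (rfp_lin_ne_zero heh _ n) (rfp_lin_ne_zero heh _ n)
    (rfp_lin_ne_zero heh _ n)]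
  simp only [Polynomial.natDegree_linear he2, rfp_lin_natDegree he1, rfp_lin_natDegree heh]
  ring

lemma Phi_Pnn_leadingCoeff (n : ℕ) :
    (Phi (Pnn n)).leadingCoeff = e2^2 * e1^n * eh^(3*n) := by
  rw [Phi_Pnn]
  simp only [Polynomial.leadingCoeff_mul, Polynomial.leadingCoeff_linear he2,
    rfp_lin_leadingCoeff he1, rfp_lin_leadingCoeff heh]
  ring

lemma Phi_Dnnl_ne (n l : ℕ) : Phi (Dnnl n l) ≠ 0 := by
  rw [Phi_Dnnl]
  exact mul_ne_zero (mul_ne_zero (mul_ne_zero (mul_ne_zero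
    (by simp) (pow_ne_zero _ XCX_ne)) (lin_ne_zero he2 _))
    (rfp_lin_ne_zero heh _ n)) (rfp_lin_ne_zero he2 _ (2*n+1))

lemma Phi_Dnnl_natDegree (n l : ℕ) : (Phi (Dnnl n l)).natDegree = 3*n+l+3 := by
  rw [Phi_Dnnl, natDegree_mul5 (by simp) (pow_ne_zero _ XCX_ne) (lin_ne_zero he2 _)
    (rfp_lin_ne_zero heh _ n) (rfp_lin_ne_zero he2 _ (2*n+1)),
    Polynomial.natDegree_pow, XCX_lin, Polynomial.natDegree_linear (Polynomial.X_ne_zero),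
    Polynomial.natDegree_C, Polynomial.natDegree_linear he2,
    rfp_lin_natDegree heh, rfp_lin_natDegree he2]
  ring

lemma Phi_Dnnl_leadingCoeff (n l : ℕ) :
    (Phi (Dnnl n l)).leadingCoeff
      = Polynomial.C ((1:ℝ)/2) * Polynomial.X^(l+1) * e2^(2*n+2) * eh^n := by
  rw [Phi_Dnnl]
  simp only [Polynomial.leadingCoeff_mul, Polynomial.leadingCoeff_pow, XCX_lin,
    Polynomial.leadingCoeff_linear he2, Polynomial.leadingCoeff_linear (Polynomial.X_ne_zero),
    rfp_lin_leadingCoeff heh, rfp_lin_leadingCoeff he2, Polynomial.leadingCoeff_C]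
  ring

section R2side

noncomputable def jj : R2 := MvPolynomial.X 0
noncomputable def kk : R2 := MvPolynomial.X 1
noncomputable def ch : R2 := MvPolynomial.C ((1:ℝ)/2)

lemma hch : ch ≠ 0 := by
  intro h
  have := congrArg (MvPolynomial.coeff 0) h
  simp [ch] at this

lemma r2f1 : (Polynomial.X - 2 * Jv - 1 : Polynomial R2)
    = Polynomial.C 1 * Polynomial.X + Polynomial.C (-(2*jj) - 1) := by
  simp only [Jv, jj, map_sub, map_neg, map_mul, map_ofNat, map_one, Polynomial.C_1]
  ring

lemma r2f2 (n : ℕ) : (Polynomial.X + 2 * (n : Polynomial R2) - 2 * Jv - 1 : Polynomial R2)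
    = Polynomial.C 1 * Polynomial.X + Polynomial.C (2*(n:R2) - 2*jj - 1) := by
  simp only [Jv, jj, map_sub, map_neg, map_mul, map_ofNat, map_one, Polynomial.C_1,
    map_natCast]
  ring

lemma r2f3 (n : ℕ) : (Polynomial.X + (n : Polynomial R2) - 2 * Jv - 1 : Polynomial R2)
    = Polynomial.C 1 * Polynomial.X + Polynomial.C ((n:R2) - 2*jj - 1) := by
  simp only [Jv, jj, map_sub, map_neg, map_mul, map_ofNat, map_one, Polynomial.C_1,
    map_natCast]
  ring

lemma r2f4 : (Polynomial.X - 2 * Jv - 1 + Kv : Polynomial R2)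
    = Polynomial.C 1 * Polynomial.X + Polynomial.C (kk - 2*jj - 1) := by
  simp only [Jv, Kv, jj, kk, map_sub, map_neg, map_mul, map_ofNat, map_one, Polynomial.C_1,
    map_add]
  ring

lemma r2g1 : (Polynomial.X - Jv : Polynomial R2)
    = Polynomial.C 1 * Polynomial.X + Polynomial.C (-jj) := by
  simp only [Jv, jj, map_neg, Polynomial.C_1]
  ring

lemma r2g2 : (cst (1/2) * Polynomial.X - Jv : Polynomial R2)
    = Polynomial.C ch * Polynomial.X + Polynomial.C (-jj) := by
  simp only [cst, ch, Jv, jj, map_neg]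
  ring

lemma r2g2' : (cst (1/2) * Polynomial.X - Jv + Kv : Polynomial R2)
    = Polynomial.C ch * Polynomial.X + Polynomial.C (kk - jj) := by
  simp only [cst, ch, Jv, Kv, jj, kk, map_sub]
  ring

lemma Pnn_eq (n : ℕ) : Pnn n
    = (Polynomial.C 1 * Polynomial.X + Polynomial.C (-(2*jj) - 1))
      * (Polynomial.C 1 * Polynomial.X + Polynomial.C (2*(n:R2) - 2*jj - 1))
      * rfp (Polynomial.C 1 * Polynomial.X + Polynomial.C (-jj)) n
      * rfp (Polynomial.C ch * Polynomial.X + Polynomial.C (-jj)) n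
      * rfp (Polynomial.C ch * Polynomial.X + Polynomial.C (kk - jj)) n
      * rfp (Polynomial.C ch * Polynomial.X + Polynomial.C (kk - jj)) n := by
  rw [Pnn, r2f1, r2f2, r2g1, r2g2', r2g2]

lemma Dnnl_eq (n l : ℕ) : Dnnl n l
    = Polynomial.C ch * Polynomial.X ^ (l+1)
      * (Polynomial.C 1 * Polynomial.X + Polynomial.C ((n:R2) - 2*jj - 1))
      * rfp (Polynomial.C ch * Polynomial.X + Polynomial.C (-jj)) n
      * rfp (Polynomial.C 1 * Polynomial.X + Polynomial.C (kk - 2*jj - 1)) (2*n+1) := by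
  rw [Dnnl, r2f3, r2g2, r2f4, cst, ch]

lemma one_ne : (1 : R2) ≠ 0 := one_ne_zero

lemma Pnn_ne (n : ℕ) : Pnn n ≠ 0 := by
  rw [Pnn_eq]
  exact mul_ne_zero (mul_ne_zero (mul_ne_zero (mul_ne_zero (mul_ne_zero
    (lin_ne_zero one_ne _) (lin_ne_zero one_ne _)) (rfp_lin_ne_zero one_ne _ n))
    (rfp_lin_ne_zero hch _ n)) (rfp_lin_ne_zero hch _ n)) (rfp_lin_ne_zero hch _ n)

lemma Pnn_natDegree (n : ℕ) : (Pnn n).natDegree = 4*n+2 := by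
  rw [Pnn_eq, natDegree_mul6 (lin_ne_zero one_ne _) (lin_ne_zero one_ne _)
    (rfp_lin_ne_zero one_ne _ n) (rfp_lin_ne_zero hch _ n) (rfp_lin_ne_zero hch _ n)
    (rfp_lin_ne_zero hch _ n)]
  simp only [Polynomial.natDegree_linear one_ne, rfp_lin_natDegree one_ne,
    rfp_lin_natDegree hch]
  ring

lemma Dnnl_ne (n l : ℕ) : Dnnl n l ≠ 0 := by
  rw [Dnnl_eq]
  exact mul_ne_zero (mul_ne_zero (mul_ne_zero (mul_ne_zero
    (Polynomial.C_ne_zero.mpr hch) (pow_ne_zero _ Polynomial.X_ne_zero))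
    (lin_ne_zero one_ne _)) (rfp_lin_ne_zero hch _ n)) (rfp_lin_ne_zero one_ne _ (2*n+1))

lemma Dnnl_natDegree (n l : ℕ) : (Dnnl n l).natDegree = 3*n+l+3 := by
  rw [Dnnl_eq, natDegree_mul5 (Polynomial.C_ne_zero.mpr hch)
    (pow_ne_zero _ Polynomial.X_ne_zero) (lin_ne_zero one_ne _)
    (rfp_lin_ne_zero hch _ n) (rfp_lin_ne_zero one_ne _ (2*n+1)),
    Polynomial.natDegree_C, Polynomial.natDegree_X_pow,
    Polynomial.natDegree_linear one_ne, rfp_lin_natDegree hch, rfp_lin_natDegree one_ne]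
  ring

end R2side

lemma natDegree_eh : eh.natDegree = 1 := by
  rw [eh, Polynomial.natDegree_C_mul (by norm_num : (2:ℝ)⁻¹ ≠ 0), e2,
    Polynomial.natDegree_X_sub_C]

lemma LD_natDegree (n l : ℕ) :
    (Polynomial.C ((1:ℝ)/2) * Polynomial.X^(l+1) * e2^(2*n+2) * eh^n).natDegree
      = 3*n+l+3 := by
  rw [Polynomial.natDegree_mul (mul_ne_zero (mul_ne_zero (by norm_num)
      (pow_ne_zero _ Polynomial.X_ne_zero)) (pow_ne_zero _ he2)) (pow_ne_zero _ heh),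
    Polynomial.natDegree_mul (mul_ne_zero (by norm_num : (Polynomial.C ((1:ℝ)/2)) ≠ 0)
      (pow_ne_zero _ Polynomial.X_ne_zero)) (pow_ne_zero _ he2),
    Polynomial.natDegree_mul (by norm_num : (Polynomial.C ((1:ℝ)/2)) ≠ 0)
      (pow_ne_zero _ Polynomial.X_ne_zero),
    Polynomial.natDegree_C, Polynomial.natDegree_X_pow, Polynomial.natDegree_pow,
    Polynomial.natDegree_pow, natDegree_eh, e2, Polynomial.natDegree_X_sub_C]
  ring

theorem stmt_11 (n l : ℕ) (hn : 1 ≤ n) (hl : l ≤ n - 1)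
    (Q Rem : Polynomial R2)
    (hdiv : Pnn n = Dnnl n l * Q + Rem)
    (hRem : Rem.degree < ((3 * n + l + 3 : ℕ) : WithBot ℕ)) :
    MvPolynomial.coeff (Finsupp.single (0 : Fin 2) (n - l - 1)) (Q.coeff 0)
      = (-1 : ℝ) ^ (n - l - 1) * (n.choose (l + 1) : ℝ) / 2 ^ (2 * n - 1) := by
  have hln : l + 1 ≤ n := by omega
  have hRemNat : Rem.natDegree ≤ 3*n+l+2 := by
    rcases eq_or_ne Rem 0 with rfl | h
    · simp
    · have := (Polynomial.natDegree_lt_iff_degree_lt h).mpr hRem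
      omega
  have hPdeg : (Pnn n).degree = ((4*n+2 : ℕ) : WithBot ℕ) := by
    rw [Polynomial.degree_eq_natDegree (Pnn_ne n), Pnn_natDegree]
  have hQ0 : Q ≠ 0 := by
    intro h
    rw [h, mul_zero, zero_add] at hdiv
    rw [← hdiv, hPdeg] at hRem
    have : (4*n+2 : ℕ) < (3*n+l+3 : ℕ) := by exact_mod_cast hRem
    omega
  have hDQ : Dnnl n l * Q = Pnn n - Rem := eq_sub_of_add_eq hdiv.symm
  have hRemDegP : Rem.degree < (Pnn n).degree := by
    rw [hPdeg]
    refine lt_of_lt_of_le hRem ?_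
    exact_mod_cast Nat.cast_le.mpr (by omega : (3*n+l+3 : ℕ) ≤ (4*n+2 : ℕ))
  have hdegDQ : (Dnnl n l * Q).degree = (Pnn n).degree := by
    rw [hDQ]
    exact Polynomial.degree_sub_eq_left_of_degree_lt hRemDegP
  have hQdeg : Q.natDegree = n - l - 1 := by
    have h1 : (Dnnl n l * Q).natDegree = (Pnn n).natDegree :=
      Polynomial.natDegree_eq_of_degree_eq hdegDQ
    rw [Polynomial.natDegree_mul (Dnnl_ne n l) hQ0, Dnnl_natDegree, Pnn_natDegree] at h1
    omega
  have hdivΦ : Phi (Pnn n) = Phi (Dnnl n l) * Phi Q + Phi Rem := by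
    rw [hdiv, map_add, map_mul]
  -- Claim 1 : t-degree of Phi Q is at most n-l-1
  have hQle : (Phi Q).natDegree ≤ n - l - 1 := by
    by_contra hM
    push_neg at hM
    have hQΦ : Phi Q ≠ 0 := by
      intro h
      rw [h, Polynomial.natDegree_zero] at hM
      omega
    have hDQnat : (Phi (Dnnl n l) * Phi Q).natDegree = 3*n+l+3 + (Phi Q).natDegree := by
      rw [Polynomial.natDegree_mul (Phi_Dnnl_ne n l) hQΦ, Phi_Dnnl_natDegree]
    have hPK : (Phi (Pnn n)).coeff (3*n+l+3 + (Phi Q).natDegree) = 0 := by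
      apply Polynomial.coeff_eq_zero_of_natDegree_lt
      rw [Phi_Pnn_natDegree]
      omega
    have hRK : (Phi Rem).coeff (3*n+l+3 + (Phi Q).natDegree)
        = -((Phi (Dnnl n l)).leadingCoeff * (Phi Q).leadingCoeff) := by
      have hc := congrArg (fun p => Polynomial.coeff p (3*n+l+3 + (Phi Q).natDegree)) hdivΦ
      simp only [Polynomial.coeff_add] at hc
      have hc2 : (Phi (Dnnl n l) * Phi Q).coeff (3*n+l+3 + (Phi Q).natDegree)
          = (Phi (Dnnl n l)).leadingCoeff * (Phi Q).leadingCoeff := by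
        rw [← Polynomial.leadingCoeff_mul, ← hDQnat]
        exact Polynomial.coeff_natDegree
      rw [hPK, hc2] at hc
      exact eq_neg_of_add_eq_zero_right hc.symm
    have h1 : ((Phi Rem).coeff (3*n+l+3 + (Phi Q).natDegree)).natDegree ≤ 3*n+l+2 :=
      le_trans (Phi_coeff_natDegree_le Rem _) hRemNat
    rw [hRK, Polynomial.natDegree_neg] at h1
    have hlq : (Phi Q).leadingCoeff ≠ 0 := Polynomial.leadingCoeff_ne_zero.mpr hQΦ
    have hLD : (Phi (Dnnl n l)).leadingCoeff ≠ 0 :=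
      Polynomial.leadingCoeff_ne_zero.mpr (Phi_Dnnl_ne n l)
    have h2 : ((Phi (Dnnl n l)).leadingCoeff).natDegree
        ≤ ((Phi (Dnnl n l)).leadingCoeff * (Phi Q).leadingCoeff).natDegree :=
      Polynomial.natDegree_le_of_dvd ⟨_, rfl⟩ (mul_ne_zero hLD hlq)
    rw [Phi_Dnnl_leadingCoeff, LD_natDegree] at h2
    rw [Phi_Dnnl_leadingCoeff] at h1
    omega
  -- Claim 2 : top t-coefficient identity in ℝ[d]
  set W : Polynomial ℝ := (Phi Q).coeff (n-l-1) with hWdef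
  have hWdeg : W.natDegree ≤ n - l - 1 := by
    rw [hWdef, ← hQdeg]
    exact Phi_coeff_natDegree_le Q _
  set E : Polynomial ℝ := (Phi Rem).coeff (4*n+2) with hEdef
  have hEdeg : E.natDegree ≤ 3*n+l+2 := le_trans (Phi_coeff_natDegree_le Rem _) hRemNat
  have hmain : (Phi (Pnn n)).leadingCoeff = (Phi (Dnnl n l)).leadingCoeff * W + E := by
    have hc := congrArg (fun p => Polynomial.coeff p (4*n+2)) hdivΦ
    simp only [Polynomial.coeff_add] at hc
    rw [show (4*n+2) = (3*n+l+3) + (n-l-1) by omega] at hc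
    rw [Polynomial.coeff_mul_add_eq_of_natDegree_le (le_of_eq (Phi_Dnnl_natDegree n l)) hQle] at hc
    have hD1 : (Phi (Dnnl n l)).coeff (3*n+l+3) = (Phi (Dnnl n l)).leadingCoeff := by
      conv_lhs => rw [← Phi_Dnnl_natDegree n l]
      exact Polynomial.coeff_natDegree
    have hP1 : (Phi (Pnn n)).coeff (3*n+l+3 + (n-l-1)) = (Phi (Pnn n)).leadingCoeff := by
      rw [show (3*n+l+3) + (n-l-1) = 4*n+2 by omega]
      conv_lhs => rw [← Phi_Pnn_natDegree n]
      exact Polynomial.coeff_natDegree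
    rw [hD1, hP1] at hc
    rw [hc]
    congr 1
    rw [hEdef]
    congr 1
    omega
  rw [Phi_Pnn_leadingCoeff, Phi_Dnnl_leadingCoeff] at hmain
  -- Extraction in ℝ[d]
  set B : Polynomial ℝ :=
    Polynomial.C ((2:ℝ)⁻¹^(3*n)) * e1^n
      - Polynomial.C ((2:ℝ)⁻¹^(n+1)) * (Polynomial.X^(l+1) * W) with hBdef
  have hBkey : e2^(3*n+2) * B = E := by
    rw [hBdef]
    have : E = e2^2 * e1^n * eh^(3*n)
        - Polynomial.C ((1:ℝ)/2) * Polynomial.X^(l+1) * e2^(2*n+2) * eh^n * W := by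
      rw [hmain]; ring
    rw [this, eh, one_div, map_pow, map_pow, mul_pow, mul_pow]
    ring
  have hBdeg : B.natDegree ≤ l := by
    rcases eq_or_ne B 0 with h | h
    · rw [h, Polynomial.natDegree_zero]; omega
    · have h1 : (e2^(3*n+2) * B).natDegree = (3*n+2) + B.natDegree := by
        rw [Polynomial.natDegree_mul (pow_ne_zero _ he2) h, Polynomial.natDegree_pow, e2,
          Polynomial.natDegree_X_sub_C, mul_one]
      rw [hBkey] at h1
      omega
  have hBco : B.coeff (l+1) = 0 :=
    Polynomial.coeff_eq_zero_of_natDegree_lt (by omega)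
  have h1 : (e1^n).coeff (l+1) = (-1:ℝ)^(n-l-1) * n.choose (l+1) := by
    rw [e1, show (Polynomial.X - Polynomial.C (1:ℝ)) = Polynomial.X + Polynomial.C (-1:ℝ)
        by rw [map_neg]; ring,
      Polynomial.coeff_X_add_C_pow]
    rw [show n - (l+1) = n - l - 1 by omega]
  have h2 : (Polynomial.X^(l+1) * W).coeff (l+1) = W.coeff 0 := by
    simpa using Polynomial.coeff_X_pow_mul W (l+1) 0
  rw [hBdef] at hBco
  rw [Polynomial.coeff_sub, Polynomial.coeff_C_mul, Polynomial.coeff_C_mul, h1, h2] at hBco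
  -- solve for W.coeff 0
  have hfin : W.coeff 0 = (-1:ℝ)^(n-l-1) * (n.choose (l+1) : ℝ) / 2^(2*n-1) := by
    have h3 : (2:ℝ)^(3*n) = 2^(2*n-1) * 2^(n+1) := by
      rw [← pow_add]
      congr 1
      omega
    rw [sub_eq_zero] at hBco
    have h5 : W.coeff 0
        = (2:ℝ)^(n+1) * ((2:ℝ)⁻¹^(3*n) * ((-1:ℝ)^(n-l-1) * (n.choose (l+1) : ℝ))) := by
      have h6 := congrArg (fun x => (2:ℝ)^(n+1) * x) hBco
      rw [← mul_assoc ((2:ℝ)^(n+1)) ((2:ℝ)⁻¹^(n+1)), ← mul_pow,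
        mul_inv_cancel₀ (two_ne_zero), one_pow, one_mul] at h6
      exact h6.symm
    rw [h5, inv_pow, h3]
    have h7 : (2:ℝ)^(2*n-1) ≠ 0 := by positivity
    have h8 : (2:ℝ)^(n+1) ≠ 0 := by positivity
    field_simp
  calc MvPolynomial.coeff (Finsupp.single (0 : Fin 2) (n - l - 1)) (Q.coeff 0)
      = (psi (Q.coeff 0)).coeff (n-l-1) := (psi_coeff _ _).symm
    _ = ((Phi Q).coeff (n-l-1)).coeff 0 := (Phi_coeff_coeff_zero Q _).symm
    _ = _ := hfin
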